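/- If the Mertens function satisfies |M(x)| ≤ C·x^{1/2} for all x ≥ 1 and some constant C, then the Riemann zeta function has no zeros with real part greater than 1/2 (i.e., the Riemann Hypothesis holds). -/

import Mathlib

open ArithmeticFunction MeasureTheory Set Filter Complex Topology
open scoped LSeries.notation
open scoped ArithmeticFunction.Moebius

noncomputable section MertensRHAux

private def Mc (x : ℝ) : ℂ := ∑ k ∈ Finset.Icc 0 ⌊x⌋₊, ((moebius k : ℤ) : ℂ)
private lemma Mc_eq (x : ℝ) :
    Mc x = ((∑ n ∈ Finset.Icc 1 ⌊x⌋₊, (moebius n : ℝ)) : ℂ) := by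
  rw [Mc, Finset.Icc_eq_cons_Ioc (Nat.zero_le _), Finset.sum_cons]
  push_cast
  rw [show Finset.Ioc 0 ⌊x⌋₊ = Finset.Icc 1 ⌊x⌋₊ from rfl]
  simp

private lemma measurable_Mc : Measurable Mc :=
  (measurable_from_nat (f := fun n => ∑ k ∈ Finset.Icc 0 n, ((moebius k : ℤ) : ℂ))).comp
    Nat.measurable_floor
private def Fm (s : ℂ) : ℂ := ∫ x in Ioi (1:ℝ), Mc x * (x:ℂ) ^ (-s - 1)

private lemma contOn_cpow (w : ℂ) : ContinuousOn (fun x : ℝ => (x:ℂ) ^ w) (Ioi 1) := by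
  intro x hx
  have hx1 : (1:ℝ) < x := hx
  have hmem : (x:ℂ) ∈ Complex.slitPlane := by
    rw [Complex.mem_slitPlane_iff]; left; simpa using (by linarith : (0:ℝ) < x)
  exact ((continuousAt_cpow_const hmem).comp
    Complex.continuous_ofReal.continuousAt).continuousWithinAt

private lemma contOn_log : ContinuousOn (fun x : ℝ => Complex.log (x:ℂ)) (Ioi 1) := by
  intro x hx
  have hx1 : (1:ℝ) < x := hx
  have hmem : (x:ℂ) ∈ Complex.slitPlane := by
    rw [Complex.mem_slitPlane_iff]; left; simpa using (by linarith : (0:ℝ) < x)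
  exact ((continuousAt_clog hmem).comp
    Complex.continuous_ofReal.continuousAt).continuousWithinAt

private lemma aesm_Mc_mul {g : ℝ → ℂ} (hg : ContinuousOn g (Ioi 1)) :
    AEStronglyMeasurable (fun x => Mc x * g x) (volume.restrict (Ioi 1)) :=
  measurable_Mc.aestronglyMeasurable.mul (hg.aestronglyMeasurable measurableSet_Ioi)

variable {C : ℝ}
  (hM : ∀ x : ℝ, 1 ≤ x →
      |(∑ n ∈ Finset.Icc 1 ⌊x⌋₊, (ArithmeticFunction.moebius n : ℝ))| ≤
        C * x ^ ((1 : ℝ) / 2))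

include hM in
private lemma C_pos' : 0 < C := by
  have h := hM 1 le_rfl
  rw [Nat.floor_one] at h
  simp [ArithmeticFunction.moebius_apply_one] at h
  linarith

include hM in
private lemma norm_Mc_le {x : ℝ} (hx : 1 ≤ x) : ‖Mc x‖ ≤ C * x ^ ((1:ℝ)/2) := by
  rw [Mc_eq, ← Complex.ofReal_sum, Complex.norm_real, Real.norm_eq_abs]
  exact hM x hx

include hM in
private lemma integrableOn_Mc_cpow {sg : ℝ} (hsg : 1/2 < sg) {s : ℂ} (hs : sg ≤ s.re) :
    IntegrableOn (fun x : ℝ => Mc x * (x:ℂ) ^ (-s - 1)) (Ioi 1) := by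
  refine Integrable.mono' (g := fun x => C * x ^ ((1:ℝ)/2 - sg - 1))
    ((integrableOn_Ioi_rpow_of_lt (by linarith) one_pos).const_mul C)
    (aesm_Mc_mul (contOn_cpow _)) ?_
  rw [ae_restrict_iff' measurableSet_Ioi]
  filter_upwards with x hx
  have hx1 : (1:ℝ) < x := hx
  have hx0 : (0:ℝ) < x := by linarith
  rw [norm_mul, Complex.norm_cpow_eq_rpow_re_of_pos hx0]
  calc ‖Mc x‖ * x ^ (-s - 1).re
      ≤ (C * x ^ ((1:ℝ)/2)) * x ^ (-sg - 1) := by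
        refine mul_le_mul (norm_Mc_le hM hx1.le) ?_ (Real.rpow_nonneg hx0.le _)
          (mul_nonneg (C_pos' hM).le (Real.rpow_nonneg hx0.le _))
        refine Real.rpow_le_rpow_of_exponent_le hx1.le ?_
        simp only [Complex.sub_re, Complex.neg_re, Complex.one_re]
        linarith
    _ = C * x ^ ((1:ℝ)/2 - sg - 1) := by
        rw [mul_assoc, ← Real.rpow_add hx0]; ring_nf

include hM in
private lemma differentiableAt_Fm {s₀ : ℂ} (h : 1/2 < s₀.re) : DifferentiableAt ℂ Fm s₀ := by
  set ε : ℝ := (s₀.re - 1/2)/4 with hε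
  have hε0 : 0 < ε := by rw [hε]; linarith
  set sg : ℝ := s₀.re - ε with hsgdef
  have hsg2 : 1/2 < sg := by rw [hsgdef, hε]; linarith
  have hball : ∀ s ∈ Metric.ball s₀ ε, sg ≤ s.re := by
    intro s hs
    have h1 : |(s - s₀).re| ≤ ‖s - s₀‖ := Complex.abs_re_le_norm _
    rw [Metric.mem_ball, dist_eq_norm] at hs
    have := abs_le.mp (h1.trans hs.le) |>.1
    simp only [Complex.sub_re] at this
    rw [hsgdef]; linarith
  have key := hasDerivAt_integral_of_dominated_loc_of_deriv_le
    (F := fun (s : ℂ) (x : ℝ) => Mc x * (x:ℂ) ^ (-s - 1))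
    (F' := fun (s : ℂ) (x : ℝ) => Mc x * ((x:ℂ) ^ (-s - 1) * Complex.log x * -1))
    (x₀ := s₀) (bound := fun x : ℝ => C * x ^ ((1:ℝ)/2 + ε - sg - 1) / ε)
    (Metric.ball_mem_nhds s₀ hε0)
    (Eventually.of_forall fun s => aesm_Mc_mul (contOn_cpow _))
    (integrableOn_Mc_cpow hM hsg2 (hball s₀ (Metric.mem_ball_self hε0)))
    (aesm_Mc_mul (((contOn_cpow _).mul contOn_log).mul continuousOn_const))
    ?_ ?_ ?_
  · exact ⟨_, key.2⟩
  · -- bound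
    rw [ae_restrict_iff' measurableSet_Ioi]
    filter_upwards with x hx
    intro s hs
    have hx1 : (1:ℝ) < x := hx
    have hx0 : (0:ℝ) < x := by linarith
    have hre : sg ≤ s.re := hball s hs
    have hlog : Complex.log (x:ℂ) = ((Real.log x : ℝ) : ℂ) := (Complex.ofReal_log hx0.le).symm
    have hlogle : Real.log x ≤ x ^ ε / ε := Real.log_le_rpow_div hx0.le hε0
    have hlogpos : 0 ≤ Real.log x := Real.log_nonneg hx1.le
    rw [norm_mul, norm_mul, norm_mul, hlog, Complex.norm_real, Real.norm_eq_abs,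
      _root_.abs_of_nonneg hlogpos, norm_neg, norm_one, mul_one,
      Complex.norm_cpow_eq_rpow_re_of_pos hx0]
    have h1 : ‖Mc x‖ ≤ C * x ^ ((1:ℝ)/2) := norm_Mc_le hM hx1.le
    have h2 : x ^ (-s - 1).re ≤ x ^ (-sg - 1) := by
      refine Real.rpow_le_rpow_of_exponent_le hx1.le ?_
      simp only [Complex.sub_re, Complex.neg_re, Complex.one_re]
      linarith
    calc ‖Mc x‖ * (x ^ (-s - 1).re * Real.log x)
        ≤ (C * x ^ ((1:ℝ)/2)) * (x ^ (-sg - 1) * (x ^ ε / ε)) := by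
          refine mul_le_mul h1 ?_ (by positivity) (mul_nonneg (C_pos' hM).le (by positivity))
          exact mul_le_mul h2 hlogle hlogpos (by positivity)
      _ = C * x ^ ((1:ℝ)/2 + ε - sg - 1) / ε := by
          rw [show x ^ ((1:ℝ)/2 + ε - sg - 1) = x ^ ((1:ℝ)/2) * (x ^ (-sg - 1) * x ^ ε) by
            rw [← Real.rpow_add hx0, ← Real.rpow_add hx0]; ring_nf]
          field_simp
  · -- integrability of bound
    apply Integrable.div_const
    exact (integrableOn_Ioi_rpow_of_lt (by rw [hsgdef, hε]; linarith) one_pos).const_mul C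
  · -- differentiability
    rw [ae_restrict_iff' measurableSet_Ioi]
    filter_upwards with x hx
    intro s hs
    have hx1 : (1:ℝ) < x := hx
    have hx0 : ((x:ℂ)) ≠ 0 := by
      simp only [ne_eq, Complex.ofReal_eq_zero]; linarith
    have hd : HasDerivAt (fun s : ℂ => -s - 1) (-1) s := by
      simpa using ((hasDerivAt_id s).neg.sub_const 1)
    have hc : HasDerivAt (fun w : ℂ => (x:ℂ) ^ w)
        ((x:ℂ) ^ (-s - 1) * Complex.log x) (-s - 1) :=
      (hasStrictDerivAt_const_cpow (Or.inl hx0)).hasDerivAt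
    have := (hc.comp s hd).const_mul (Mc x)
    simpa [mul_assoc] using this

-- derivative of t ↦ (t:ℂ)^(-s)
private lemma hasDerivAt_f {s : ℂ} (hs : s ≠ 0) {t : ℝ} (ht : 0 < t) :
    HasDerivAt (fun y : ℝ => (y:ℂ) ^ (-s)) (-s * (t:ℂ) ^ (-s - 1)) t := by
  have hr : (-s - 1 : ℂ) ≠ -1 := fun hh => hs (by linear_combination -hh)
  have h0 := hasDerivAt_ofReal_cpow_const' ht.ne' hr
  have he : (-s - 1 + 1 : ℂ) = -s := by ring
  rw [he] at h0
  have h1 := h0.const_mul (-s)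
  have he2 : (fun y : ℝ => -s * ((y:ℂ) ^ (-s) / (-s))) = fun y : ℝ => (y:ℂ) ^ (-s) := by
    funext y
    have : (-s) ≠ 0 := neg_ne_zero.mpr hs
    field_simp
  rw [he2] at h1
  exact h1

include hM in
private lemma LSeries_eq_mul_Fm {s : ℂ} (hs : 1 < s.re) : LSeries ↗μ s = s * Fm s := by
  have hs0 : s ≠ 0 := by
    intro h; rw [h] at hs; simp at hs; linarith
  set f : ℝ → ℂ := fun y => (y:ℂ) ^ (-s) with hf
  set c : ℕ → ℂ := fun k => ((moebius k : ℤ) : ℂ) with hc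
  -- the integrand for the limit
  set g : ℝ → ℂ := fun t => -s * (Mc t * (t:ℂ) ^ (-s - 1)) with hg
  have hgint : IntegrableOn g (Ioi 1) :=
    (integrableOn_Mc_cpow hM (by linarith) le_rfl).const_mul (-s)
  -- Abel summation identity
  have habel : ∀ n : ℕ, ∑ k ∈ Finset.Icc 0 n, f k * c k =
      f n * Mc n - ∫ t in Ioc 1 (n:ℝ), deriv f t * Mc t := by
    intro n
    have hdiff : ∀ t ∈ Icc (1:ℝ) (n:ℝ), DifferentiableAt ℝ f t := fun t ht =>
      (hasDerivAt_f hs0 (by linarith [ht.1] : (0:ℝ) < t)).differentiableAt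
    have hcont : ContinuousOn (fun t : ℝ => -s * (t:ℂ) ^ (-s - 1)) (Icc 1 (n:ℝ)) := by
      refine continuousOn_const.mul ?_
      intro x hx
      have hx0 : (0:ℝ) < x := by linarith [hx.1]
      have hmem : (x:ℂ) ∈ Complex.slitPlane := by
        rw [Complex.mem_slitPlane_iff]; left; simpa using hx0
      exact ((continuousAt_cpow_const hmem).comp
        Complex.continuous_ofReal.continuousAt).continuousWithinAt
    have hint : IntegrableOn (deriv f) (Icc 1 (n:ℝ)) := by
      refine (hcont.integrableOn_Icc).congr_fun ?_ measurableSet_Icc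
      intro t ht
      exact ((hasDerivAt_f hs0 (by linarith [ht.1] : (0:ℝ) < t)).deriv).symm
    have h := sum_mul_eq_sub_integral_mul₀ c (by simp [hc]) (n:ℝ) hdiff hint
    have hMcn : Mc (n:ℝ) = ∑ k ∈ Finset.Icc 0 n, c k := by
      rw [Mc, Nat.floor_natCast]
    rw [Nat.floor_natCast, ← hMcn] at h
    exact h
  -- limit of partial sums is the L-series
  have hsum : LSeriesSummable ↗μ s := LSeriesSummable_moebius_iff.mpr hs
  have h1 : Tendsto (fun n : ℕ => ∑ k ∈ Finset.Icc 0 n, f k * c k) atTop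
      (𝓝 (LSeries ↗μ s)) := by
    have hterm : ∀ k : ℕ, f k * c k = LSeries.term ↗μ s k := by
      intro k
      rcases Nat.eq_zero_or_pos k with rfl | hk
      · simp [hf, hc, LSeries.term_zero, Complex.zero_cpow (neg_ne_zero.mpr hs0)]
      · rw [LSeries.term_of_ne_zero hk.ne']
        have : ((k:ℝ):ℂ) = (k:ℂ) := by push_cast; rfl
        rw [hf, hc]
        simp only [this]
        rw [Complex.cpow_neg, div_eq_mul_inv]
        ring
    have := hsum.hasSum.tendsto_sum_nat.comp (tendsto_add_atTop_nat 1)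
    refine this.congr fun n => ?_
    rw [Function.comp_apply, ← Nat.Ico_zero_eq_range, Finset.Ico_add_one_right_eq_Icc]
    exact Finset.sum_congr rfl fun k _ => (hterm k).symm
  -- the boundary term tends to 0
  have h2 : Tendsto (fun n : ℕ => f n * Mc n) atTop (𝓝 0) := by
    have hb : Tendsto (fun n : ℕ => C * (n:ℝ) ^ ((1:ℝ)/2 - s.re)) atTop (𝓝 0) := by
      have h0 : Tendsto (fun x : ℝ => x ^ (-(s.re - 1/2))) atTop (𝓝 0) :=
        tendsto_rpow_neg_atTop (by linarith)
      have := (h0.comp tendsto_natCast_atTop_atTop).const_mul C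
      rw [mul_zero] at this
      refine this.congr fun n => ?_
      rw [Function.comp_apply]
      norm_num
    refine squeeze_zero_norm' ?_ hb
    filter_upwards [eventually_ge_atTop 1] with n hn
    have hn1 : (1:ℝ) ≤ (n:ℝ) := by exact_mod_cast hn
    have hn0 : (0:ℝ) < (n:ℝ) := by linarith
    rw [norm_mul, hf]
    calc ‖((n:ℝ):ℂ) ^ (-s)‖ * ‖Mc n‖
        ≤ (n:ℝ) ^ (-s.re) * (C * (n:ℝ) ^ ((1:ℝ)/2)) := by
          refine mul_le_mul ?_ (norm_Mc_le hM hn1) (norm_nonneg _) (Real.rpow_nonneg hn0.le _)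
          rw [Complex.norm_cpow_eq_rpow_re_of_pos hn0]
          simp
      _ = C * (n:ℝ) ^ ((1:ℝ)/2 - s.re) := by
          rw [show (n:ℝ) ^ (-s.re) * (C * (n:ℝ) ^ ((1:ℝ)/2))
              = C * ((n:ℝ) ^ ((1:ℝ)/2) * (n:ℝ) ^ (-s.re)) by ring, ← Real.rpow_add hn0]
          ring_nf
  -- the integral term converges
  have h3 : Tendsto (fun n : ℕ => ∫ t in Ioc 1 (n:ℝ), deriv f t * Mc t) atTop
      (𝓝 (∫ t in Ioi 1, g t)) := by
    have := intervalIntegral_tendsto_integral_Ioi 1 hgint tendsto_natCast_atTop_atTop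
    refine Tendsto.congr' ?_ this
    filter_upwards [eventually_ge_atTop 1] with n hn
    have hn1 : (1:ℝ) ≤ (n:ℝ) := by exact_mod_cast hn
    rw [intervalIntegral.integral_of_le hn1]
    refine setIntegral_congr_fun measurableSet_Ioc fun t ht => ?_
    have ht0 : (0:ℝ) < t := by linarith [ht.1]
    rw [(hasDerivAt_f hs0 ht0).deriv, hg]
    ring
  -- combine
  have hcomb : Tendsto (fun n : ℕ => ∑ k ∈ Finset.Icc 0 n, f k * c k) atTop
      (𝓝 (0 - ∫ t in Ioi 1, g t)) := by
    refine Tendsto.congr (fun n => (habel n).symm) (h2.sub h3)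
  have heq := tendsto_nhds_unique h1 hcomb
  have hgi : (∫ t in Ioi (1:ℝ), g t) = -s * Fm s := by
    simp only [hg]
    rw [MeasureTheory.integral_const_mul]
    rfl
  rw [heq, hgi]
  ring


private lemma preconn :
    IsPreconnected ({s : ℂ | 1/2 < s.re} \ {1}) := by
  have hP1 : IsPreconnected {s : ℂ | 1/2 < s.re ∧ 0 < s.im} :=
    ((convex_halfSpace_re_gt _).inter (convex_halfSpace_im_gt _)).isPreconnected
  have hP2 : IsPreconnected {s : ℂ | 1/2 < s.re ∧ s.im < 0} :=
    ((convex_halfSpace_re_gt _).inter (convex_halfSpace_im_lt _)).isPreconnected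
  have hP3 : IsPreconnected {s : ℂ | 1/2 < s.re ∧ s.re < 1} :=
    ((convex_halfSpace_re_gt _).inter (convex_halfSpace_re_lt _)).isPreconnected
  have hP4 : IsPreconnected {s : ℂ | 1 < s.re} :=
    (convex_halfSpace_re_gt _).isPreconnected
  have h31 : IsPreconnected ({s : ℂ | 1/2 < s.re ∧ s.re < 1} ∪
      {s : ℂ | 1/2 < s.re ∧ 0 < s.im}) := by
    refine IsPreconnected.union (Complex.mk (3/4) 1) ?_ ?_ hP3 hP1 <;>
      constructor <;> norm_num
  have h312 : IsPreconnected (({s : ℂ | 1/2 < s.re ∧ s.re < 1} ∪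
      {s : ℂ | 1/2 < s.re ∧ 0 < s.im}) ∪ {s : ℂ | 1/2 < s.re ∧ s.im < 0}) := by
    refine IsPreconnected.union (Complex.mk (3/4) (-1)) ?_ ?_ h31 hP2
    · left; constructor <;> norm_num
    · constructor <;> norm_num
  have h3124 : IsPreconnected ((({s : ℂ | 1/2 < s.re ∧ s.re < 1} ∪
      {s : ℂ | 1/2 < s.re ∧ 0 < s.im}) ∪ {s : ℂ | 1/2 < s.re ∧ s.im < 0}) ∪
      {s : ℂ | 1 < s.re}) := by
    refine IsPreconnected.union (Complex.mk 2 1) ?_ ?_ h312 hP4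
    · left; right; constructor <;> norm_num
    · norm_num
  convert h3124 using 1
  ext z
  simp only [mem_diff, mem_setOf_eq, mem_singleton_iff, mem_union]
  constructor
  · rintro ⟨hre, hne⟩
    rcases lt_trichotomy z.im 0 with him | him | him
    · exact Or.inl (Or.inr ⟨hre, him⟩)
    · rcases lt_trichotomy z.re 1 with hr | hr | hr
      · exact Or.inl (Or.inl (Or.inl ⟨hre, hr⟩))
      · exact absurd (Complex.ext hr him) hne
      · exact Or.inr hr
    · exact Or.inl (Or.inl (Or.inr ⟨hre, him⟩))
  · rintro (((⟨h1, h2⟩ | ⟨h1, h2⟩) | ⟨h1, h2⟩) | h1)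
    · exact ⟨h1, fun he => by rw [he] at h2; simp at h2⟩
    · exact ⟨h1, fun he => by rw [he] at h2; simp at h2⟩
    · exact ⟨h1, fun he => by rw [he] at h2; simp at h2⟩
    · exact ⟨by linarith, fun he => by rw [he] at h1; simp at h1⟩

include hM in
private theorem RH_of_mertens_bound_aux :
    ∀ s : ℂ, 1 / 2 < s.re → riemannZeta s ≠ 0 := by
  intro s hs
  rcases le_or_gt 1 s.re with h1 | h1
  · exact riemannZeta_ne_zero_of_one_le_re h1
  -- set-up
  set U : Set ℂ := {z : ℂ | 1/2 < z.re} \ {1} with hU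
  have hUopen : IsOpen U :=
    (isOpen_lt continuous_const Complex.continuous_re).sdiff isClosed_singleton
  set G : ℂ → ℂ := fun z => z * Fm z * riemannZeta z with hG
  have hGdiff : DifferentiableOn ℂ G U := by
    intro z hz
    have hz1 : 1/2 < z.re := hz.1
    have hz2 : z ≠ 1 := hz.2
    exact ((differentiableAt_id.mul (differentiableAt_Fm hM hz1)).mul
      (differentiableAt_riemannZeta hz2)).differentiableWithinAt
  have hGanal : AnalyticOnNhd ℂ G U := hGdiff.analyticOnNhd hUopen
  have hone : ∀ z : ℂ, 1 < z.re → G z = 1 := by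
    intro z hz
    have h1 := LSeries_eq_mul_Fm hM hz
    have h2 := ArithmeticFunction.LSeries_zeta_mul_Lseries_moebius hz
    have h3 := LSeries_zeta_eq_riemannZeta hz
    rw [hG]
    simp only
    rw [← h1, mul_comm, ← h3]
    exact h2
  have h2U : (2:ℂ) ∈ U := by
    constructor
    · norm_num
    · simp only [mem_singleton_iff]
      intro h
      have := congrArg Complex.re h
      norm_num at this
  have hev : G =ᶠ[𝓝 (2:ℂ)] (fun _ => 1) := by
    have hopen1 : IsOpen {z : ℂ | 1 < z.re} := isOpen_lt continuous_const Complex.continuous_re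
    refine Filter.eventuallyEq_of_mem (hopen1.mem_nhds ?_) fun z hz => hone z hz
    show (1:ℝ) < (2:ℂ).re
    norm_num
  have hEq : EqOn G (fun _ => 1) U :=
    hGanal.eqOn_of_preconnected_of_eventuallyEq analyticOnNhd_const preconn h2U hev
  have hsU : s ∈ U := ⟨hs, by
    simp only [mem_singleton_iff]
    intro h
    rw [h] at h1
    norm_num at h1⟩
  have := hEq hsU
  simp only [hG] at this
  intro hzero
  rw [hzero, mul_zero] at this
  exact zero_ne_one this

end MertensRHAux

/-- If the Mertens function `M(x) = ∑_{n ≤ x} μ(n)` satisfies `|M(x)| ≤ C √x`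
for all `x ≥ 1`, then the Riemann zeta function has no zeros of real part
greater than `1/2`, i.e. the Riemann Hypothesis holds. -/
theorem RH_of_mertens_bound
    (C : ℝ)
    (hM : ∀ x : ℝ, 1 ≤ x →
      |(∑ n ∈ Finset.Icc 1 ⌊x⌋₊, (ArithmeticFunction.moebius n : ℝ))| ≤
        C * x ^ ((1 : ℝ) / 2)) :
    ∀ s : ℂ, 1 / 2 < s.re → riemannZeta s ≠ 0 := by
  exact RH_of_mertens_bound_aux hM
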